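/- The index of convergence of a strongly connected primitive digraph on n ≥ 2 nodes is at most (n-1)² + 1; that is, for every pair of nodes (i,j) and every k ≥ (n-1)² + 1, there is a walk of length k from i to j. -/

import Mathlib

/-- `f` lists the successive nodes of a walk of length `k` in the digraph with
edge relation `E`. -/
def IsGWalk {n : ℕ} (E : Fin n → Fin n → Prop) {k : ℕ} (f : Fin (k + 1) → Fin n) : Prop :=
  ∀ t : Fin k, E (f t.castSucc) (f t.succ)

/-- A cycle: a nonempty closed walk in which only the start and end node coincide. -/
def IsGCycle {n : ℕ} (E : Fin n → Fin n → Prop) {k : ℕ} (f : Fin (k + 1) → Fin n) : Prop :=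
  0 < k ∧ IsGWalk E f ∧ f 0 = f (Fin.last k) ∧
    Function.Injective (fun t : Fin k => f t.castSucc)

namespace WielandtAux

variable {n : ℕ}

/-- Walks indexed by naturals. -/
def NWalk (E : Fin n → Fin n → Prop) (k : ℕ) (i j : Fin n) : Prop :=
  ∃ f : ℕ → Fin n, f 0 = i ∧ f k = j ∧ ∀ t < k, E (f t) (f (t + 1))

variable {E : Fin n → Fin n → Prop}

lemma nwalk_zero_iff {i j : Fin n} : NWalk E 0 i j ↔ i = j := by
  constructor
  · rintro ⟨f, h0, hk, -⟩; rw [← h0, ← hk]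
  · rintro rfl; exact ⟨fun _ => i, rfl, rfl, fun t ht => absurd ht (by omega)⟩

lemma nwalk_nil (i : Fin n) : NWalk E 0 i i := nwalk_zero_iff.mpr rfl

lemma nwalk_single {i j : Fin n} (h : E i j) : NWalk E 1 i j := by
  refine ⟨fun t => if t = 0 then i else j, by simp, by simp, ?_⟩
  intro t ht
  interval_cases t
  simpa using h

lemma nwalk_loop {i : Fin n} (h : E i i) (k : ℕ) : NWalk E k i i :=
  ⟨fun _ => i, rfl, rfl, fun _ _ => h⟩

lemma nwalk_append {a b : ℕ} {i j l : Fin n} (h1 : NWalk E a i j) (h2 : NWalk E b j l) :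
    NWalk E (a + b) i l := by
  obtain ⟨f, hf0, hfa, hf⟩ := h1
  obtain ⟨g, hg0, hgb, hg⟩ := h2
  refine ⟨fun t => if t ≤ a then f t else g (t - a), by simp [hf0], ?_, ?_⟩
  · show (if a + b ≤ a then f (a + b) else g (a + b - a)) = l
    by_cases h : a + b ≤ a
    · rw [if_pos h, show a + b = a by omega, hfa, ← hg0, show (0:ℕ) = b by omega, hgb]
    · rw [if_neg h, show a + b - a = b by omega, hgb]
  · intro t ht
    show E (if t ≤ a then f t else g (t - a)) (if t + 1 ≤ a then f (t + 1) else g (t + 1 - a))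
    by_cases h1' : t + 1 ≤ a
    · rw [if_pos (show t ≤ a by omega), if_pos h1']
      exact hf t (by omega)
    · by_cases h2' : t ≤ a
      · rw [if_pos h2', if_neg h1', show t + 1 - a = 1 by omega, show t = a by omega, hfa, ← hg0]
        exact hg 0 (by omega)
      · rw [if_neg h2', if_neg h1', show t + 1 - a = t - a + 1 by omega]
        exact hg (t - a) (by omega)

lemma nwalk_of_finwalk {k : ℕ} {f : Fin (k + 1) → Fin n} (hf : IsGWalk E f) :
    NWalk E k (f 0) (f (Fin.last k)) := by
  refine ⟨fun t => f ⟨min t k, by omega⟩, ?_, ?_, ?_⟩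
  · congr 1
  · congr 1; ext; simp [Fin.last]
  · intro t ht
    have := hf ⟨t, ht⟩
    have e1 : Fin.castSucc ⟨t, ht⟩ = (⟨min t k, by omega⟩ : Fin (k + 1)) := by
      ext; simp [Fin.castSucc, Fin.castAdd, Fin.castLE]; omega
    have e2 : Fin.succ ⟨t, ht⟩ = (⟨min (t + 1) k, by omega⟩ : Fin (k + 1)) := by
      ext; simp [Fin.succ]; omega
    rw [e1, e2] at this
    exact this

lemma finwalk_of_nwalk {k : ℕ} {i j : Fin n} (h : NWalk E k i j) :
    ∃ f : Fin (k + 1) → Fin n, IsGWalk E f ∧ f 0 = i ∧ f (Fin.last k) = j := by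
  obtain ⟨f, h0, hk, hf⟩ := h
  exact ⟨fun t => f t.val, fun t => hf t.val t.isLt, h0, hk⟩

lemma nwalk_of_hsc {i j : Fin n}
    (h : ∃ (k : ℕ) (f : Fin (k + 1) → Fin n), IsGWalk E f ∧ f 0 = i ∧ f (Fin.last k) = j) :
    ∃ k, NWalk E k i j := by
  obtain ⟨k, f, hw, h0, hl⟩ := h
  exact ⟨k, h0 ▸ hl ▸ nwalk_of_finwalk hw⟩

lemma nwalk_splice {k a b : ℕ} {f : ℕ → Fin n} (hf : ∀ t < k, E (f t) (f (t + 1)))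
    (hab : a < b) (hbk : b ≤ k) (heq : f a = f b) :
    NWalk E (k - (b - a)) (f 0) (f k) := by
  refine ⟨fun t => if t ≤ a then f t else f (t + (b - a)), by simp, ?_, ?_⟩
  · show (if k - (b - a) ≤ a then f (k - (b - a)) else f (k - (b - a) + (b - a))) = f k
    by_cases h : k - (b - a) ≤ a
    · rw [if_pos h, show k - (b - a) = a by omega, heq, show b = k by omega]
    · rw [if_neg h, show k - (b - a) + (b - a) = k by omega]
  · intro t ht
    show E (if t ≤ a then f t else f (t + (b - a)))
      (if t + 1 ≤ a then f (t + 1) else f (t + 1 + (b - a)))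
    by_cases h1' : t + 1 ≤ a
    · rw [if_pos (show t ≤ a by omega), if_pos h1']
      exact hf t (by omega)
    · by_cases h2' : t ≤ a
      · rw [if_pos h2', if_neg h1', show t + 1 + (b - a) = b + 1 by omega, show t = a by omega,
          heq]
        exact hf b (by omega)
      · rw [if_neg h2', if_neg h1', show t + 1 + (b - a) = t + (b - a) + 1 by omega]
        exact hf (t + (b - a)) (by omega)

lemma nwalk_shorten (hn : 0 < n) {k : ℕ} {i j : Fin n} (h : NWalk E k i j) :
    ∃ m, m ≤ k ∧ m ≤ n - 1 ∧ NWalk E m i j := by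
  induction k using Nat.strong_induction_on with
  | _ k ih =>
    by_cases hk : k ≤ n - 1
    · exact ⟨k, le_refl k, hk, h⟩
    · obtain ⟨f, h0, hk', hf⟩ := h
      have hcard : Fintype.card (Fin n) < Fintype.card (Fin (n + 1)) := by simp
      obtain ⟨x, y, hxy, hfxy⟩ :=
        Fintype.exists_ne_map_eq_of_card_lt (fun t : Fin (n + 1) => f t.val) hcard
      rcases Nat.lt_or_ge x.val y.val with hlt | hge
      · have hs := nwalk_splice hf hlt (by omega) hfxy
        rw [h0, hk'] at hs
        obtain ⟨m, hm1, hm2, hm3⟩ := ih (k - (y.val - x.val)) (by omega) hs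
        exact ⟨m, by omega, hm2, hm3⟩
      · have hlt : y.val < x.val := by
          rcases Nat.lt_or_ge y.val x.val with h' | h'
          · exact h'
          · exact absurd (Fin.ext (by omega)) hxy
        have hs := nwalk_splice hf hlt (by omega) hfxy.symm
        rw [h0, hk'] at hs
        obtain ⟨m, hm1, hm2, hm3⟩ := ih (k - (x.val - y.val)) (by omega) hs
        exact ⟨m, by omega, hm2, hm3⟩

lemma nwalk_split {a b : ℕ} {i j : Fin n} (h : NWalk E (a + b) i j) :
    ∃ m, NWalk E a i m ∧ NWalk E b m j := by
  obtain ⟨f, h0, hab, hf⟩ := h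
  refine ⟨f a, ⟨f, h0, rfl, fun t ht => hf t (by omega)⟩,
    ⟨fun t => f (a + t), by simp, by rw [← hab], fun t ht => ?_⟩⟩
  show E (f (a + t)) (f (a + (t + 1)))
  rw [show a + (t + 1) = a + t + 1 by omega]
  exact hf (a + t) (by omega)

lemma nwalk_nsmul {c : ℕ} {v : Fin n} (h : NWalk E c v v) (r : ℕ) : NWalk E (r * c) v v := by
  induction r with
  | zero => simpa using nwalk_nil v
  | succ r ih =>
    have := nwalk_append ih h
    rwa [show r * c + c = (r + 1) * c by ring] at this

lemma nwalk_chunk_to {s m : ℕ} {i j : Fin n}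
    (h : NWalk (fun a b => NWalk E s a b) m i j) : NWalk E (s * m) i j := by
  induction m generalizing i with
  | zero =>
    rw [Nat.mul_zero]
    exact nwalk_zero_iff.mpr (nwalk_zero_iff.mp h)
  | succ m ih =>
    rw [show m + 1 = 1 + m by ring] at h
    obtain ⟨mid, h1, h2⟩ := nwalk_split h
    have e1 : NWalk E s i mid := by
      obtain ⟨g, hg0, hg1, hg⟩ := h1
      have := hg 0 (by omega)
      rwa [hg0, hg1] at this
    have := nwalk_append e1 (ih h2)
    rwa [show s + s * m = s * (m + 1) by ring] at this

lemma nwalk_chunk_from {s m : ℕ} {i j : Fin n}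
    (h : NWalk E (s * m) i j) : NWalk (fun a b => NWalk E s a b) m i j := by
  induction m generalizing i with
  | zero =>
    rw [Nat.mul_zero] at h
    exact nwalk_zero_iff.mpr (nwalk_zero_iff.mp h)
  | succ m ih =>
    rw [show s * (m + 1) = s + s * m by ring] at h
    obtain ⟨mid, h1, h2⟩ := nwalk_split h
    have := nwalk_append (nwalk_single (E := fun a b => NWalk E s a b) h1) (ih h2)
    rwa [show 1 + m = m + 1 by ring] at this

lemma nwalk_cyc {s : ℕ} (hs : 0 < s) {f : ℕ → Fin n}
    (hf : ∀ t < s, E (f t) (f (t + 1))) (hcl : f s = f 0) (a ℓ : ℕ) :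
    NWalk E ℓ (f (a % s)) (f ((a + ℓ) % s)) := by
  have key : ∀ t, E (f (t % s)) (f ((t + 1) % s)) := by
    intro t
    have hr : t % s < s := Nat.mod_lt _ hs
    have base : (t + 1) % s = (t % s + 1 % s) % s := Nat.add_mod t 1 s
    rcases eq_or_lt_of_le (show 1 ≤ s by omega) with hs1 | hs1
    · have hmod : ∀ m : ℕ, m % s = 0 := fun m => by rw [← hs1, Nat.mod_one]
      rw [hmod t, hmod (t + 1)]
      have := hf 0 hs
      rw [show (0:ℕ) + 1 = s by omega, hcl] at this
      exact this
    · have h1s : 1 % s = 1 := Nat.mod_eq_of_lt hs1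
      rw [h1s] at base
      rcases Nat.lt_or_ge (t % s + 1) s with h | h
      · rw [base, Nat.mod_eq_of_lt h]
        exact hf _ hr
      · have he : t % s + 1 = s := by omega
        have e0 : (t + 1) % s = 0 := by rw [base, he, Nat.mod_self]
        rw [e0, ← hcl]
        have := hf _ hr
        rwa [he] at this
  refine ⟨fun t => f ((a + t) % s), by simp, by simp, fun t ht => ?_⟩
  show E (f ((a + t) % s)) (f ((a + (t + 1)) % s))
  rw [show a + (t + 1) = (a + t) + 1 by omega]
  exact key (a + t)



/-- Key residue lemma: at any vertex `j` there is a closed walk whose length makes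
`d₀ + x` divisible by `s`. -/
lemma residue (hsc' : ∀ a b : Fin n, ∃ m, NWalk E m a b)
    (hprim : ∀ m : ℕ,
      (∀ (k : ℕ) (f : Fin (k + 1) → Fin n), IsGCycle E f → m ∣ k) → m = 1)
    {s : ℕ} (hs : 1 ≤ s) (j : Fin n) (d₀ : ℕ) :
    ∃ x, NWalk E x j j ∧ s ∣ (d₀ + x) := by
  set T : Set ℤ := {z | ∃ x : ℕ, NWalk E x j j ∧ (x : ℤ) = z} with hT
  obtain ⟨a, ha⟩ := Int.subgroup_cyclic (AddSubgroup.closure T)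
  have hmemH : ∀ z : ℤ, z ∈ AddSubgroup.closure T ↔ a ∣ z := by
    intro z
    rw [ha, ← AddSubgroup.zmultiples_eq_closure]
    exact Int.mem_zmultiples_iff
  have hdvd : ∀ (c : ℕ) (g : Fin (c + 1) → Fin n), IsGCycle E g → a.natAbs ∣ c := by
    intro c g hg
    obtain ⟨hc0, hw, hcl, hinj⟩ := hg
    have hcw : NWalk E c (g 0) (g 0) := by
      have := nwalk_of_finwalk hw
      rwa [← hcl] at this
    obtain ⟨p, hp⟩ := hsc' j (g 0)
    obtain ⟨q, hq⟩ := hsc' (g 0) j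
    have x1 : NWalk E (p + q) j j := nwalk_append hp hq
    have x2 : NWalk E (p + (c + q)) j j := nwalk_append hp (nwalk_append hcw hq)
    have m1 : ((p + q : ℕ) : ℤ) ∈ AddSubgroup.closure T :=
      AddSubgroup.subset_closure ⟨p + q, x1, rfl⟩
    have m2 : ((p + (c + q) : ℕ) : ℤ) ∈ AddSubgroup.closure T :=
      AddSubgroup.subset_closure ⟨p + (c + q), x2, rfl⟩
    have hc : (c : ℤ) ∈ AddSubgroup.closure T := by
      have := sub_mem m2 m1
      have e : ((p + (c + q) : ℕ) : ℤ) - ((p + q : ℕ) : ℤ) = (c : ℤ) := by push_cast; ring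
      rwa [e] at this
    have : a ∣ (c : ℤ) := (hmemH _).mp hc
    have := Int.natAbs_dvd_natAbs.mpr this
    simpa using this
  have ha1 : a.natAbs = 1 := hprim _ hdvd
  have hall : ∀ z : ℤ, z ∈ AddSubgroup.closure T := by
    intro z
    rw [hmemH]
    have : (a.natAbs : ℤ) ∣ z := by rw [ha1]; exact one_dvd z
    exact Int.natAbs_dvd.mp this
  have main : ∀ (z : ℤ), z ∈ AddSubgroup.closure T →
      ∃ x : ℕ, NWalk E x j j ∧ (s : ℤ) ∣ z - (x : ℤ) := by
    intro z hz
    induction hz using AddSubgroup.closure_induction with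
    | mem x hx =>
      obtain ⟨x₀, hw, hx₀⟩ := hx
      exact ⟨x₀, hw, by rw [← hx₀]; simp⟩
    | zero => exact ⟨0, nwalk_nil j, by simp⟩
    | add x y hx hy ihx ihy =>
      obtain ⟨x₁, w₁, d₁⟩ := ihx
      obtain ⟨x₂, w₂, d₂⟩ := ihy
      refine ⟨x₁ + x₂, nwalk_append w₁ w₂, ?_⟩
      have e : x + y - ((x₁ + x₂ : ℕ) : ℤ) = (x - x₁) + (y - x₂) := by push_cast; ring
      rw [e]
      exact dvd_add d₁ d₂
    | neg x hx ihx =>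
      obtain ⟨x₁, w₁, d₁⟩ := ihx
      refine ⟨(s - 1) * x₁, nwalk_nsmul w₁ (s - 1), ?_⟩
      have e : -x - (((s - 1) * x₁ : ℕ) : ℤ) = -(x - x₁) - (s : ℤ) * x₁ := by
        push_cast [Nat.cast_sub hs]
        ring
      rw [e]
      exact dvd_sub (dvd_neg.mpr d₁) (dvd_mul_right _ _)
  obtain ⟨x, hw, hd⟩ := main (-(d₀ : ℤ)) (hall _)
  refine ⟨x, hw, ?_⟩
  have : (s : ℤ) ∣ ((d₀ + x : ℕ) : ℤ) := by
    have e : ((d₀ + x : ℕ) : ℤ) = -(-(d₀ : ℤ) - (x : ℤ)) := by push_cast; ring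
    rw [e]
    exact dvd_neg.mpr hd
  exact_mod_cast this

end WielandtAux


open WielandtAux in
theorem wielandt_bound {n : ℕ} (hn : 2 ≤ n) (E : Fin n → Fin n → Prop)
    (hsc : ∀ i j : Fin n, ∃ (k : ℕ) (f : Fin (k + 1) → Fin n),
      IsGWalk E f ∧ f 0 = i ∧ f (Fin.last k) = j)
    (hprim : ∀ m : ℕ,
      (∀ (k : ℕ) (f : Fin (k + 1) → Fin n), IsGCycle E f → m ∣ k) → m = 1) :
    ∀ i j : Fin n, ∀ k, (n - 1) ^ 2 + 1 ≤ k →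
      ∃ f : Fin (k + 1) → Fin n, IsGWalk E f ∧ f 0 = i ∧ f (Fin.last k) = j := by
  classical
  obtain ⟨m, rfl⟩ : ∃ m, n = m + 2 := ⟨n - 2, by omega⟩
  intro i j k hk
  have hn0 : 0 < m + 2 := by omega
  have hsc' : ∀ a b : Fin (m + 2), ∃ m', NWalk E m' a b := fun a b => nwalk_of_hsc (hsc a b)
  -- a positive closed walk exists
  have hex : ∃ c, 0 < c ∧ ∃ v : Fin (m + 2), NWalk E c v v := by
    obtain ⟨p, hp⟩ := hsc' ⟨0, by omega⟩ ⟨1, by omega⟩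
    obtain ⟨q, hq⟩ := hsc' ⟨1, by omega⟩ ⟨0, by omega⟩
    refine ⟨p + q, ?_, ⟨0, by omega⟩, nwalk_append hp hq⟩
    rcases Nat.eq_zero_or_pos (p + q) with h0 | h0
    · exfalso
      have hp0 : p = 0 := by omega
      rw [hp0] at hp
      have := congrArg Fin.val (nwalk_zero_iff.mp hp)
      simp at this
    · exact h0
  set s := Nat.find hex with hsdef
  obtain ⟨hs0, u, hu⟩ := Nat.find_spec hex
  obtain ⟨f, hf0, hfs, hf⟩ := hu
  have hs_min : ∀ c, 0 < c → (∃ v, NWalk E c v v) → s ≤ c :=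
    fun c h1 h2 => Nat.find_min' hex ⟨h1, h2⟩
  have hfsf0 : f s = f 0 := by rw [hfs, hf0]
  -- distinctness of the first s vertices of the short cycle
  have hinj : ∀ a b, a < b → b < s → f a ≠ f b := by
    intro a b hab hbs heq
    have w : NWalk E (b - a) (f a) (f a) := by
      refine ⟨fun t => f (a + t), by simp, ?_, ?_⟩
      · show f (a + (b - a)) = f a
        rw [show a + (b - a) = b by omega, ← heq]
      · intro t ht
        show E (f (a + t)) (f (a + (t + 1)))
        rw [show a + (t + 1) = (a + t) + 1 by omega]
        exact hf (a + t) (by omega)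
    have := hs_min (b - a) (by omega) ⟨f a, w⟩
    omega
  -- s is at most n - 1
  have hsle : s ≤ m + 2 := by
    have hinj' : Function.Injective (fun t : Fin s => f t.val) := by
      intro a b hab
      by_contra hne
      have hne' : a.val ≠ b.val := fun hc => hne (Fin.ext hc)
      rcases Nat.lt_or_ge a.val b.val with h | h
      · exact hinj a.val b.val h b.isLt hab
      · exact hinj b.val a.val (by omega) a.isLt hab.symm
    simpa using Fintype.card_le_of_injective _ hinj'
  have hsm1 : s ≤ m + 1 := by
    by_contra hcon
    have hsn : s = m + 2 := by omega
    have hall : ∀ (c : ℕ) (g : Fin (c + 1) → Fin (m + 2)), IsGCycle E g → (m + 2) ∣ c := by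
      intro c g hg
      obtain ⟨hc0, hw, hcl, hginj⟩ := hg
      have hcs : s ≤ c := by
        refine hs_min c hc0 ⟨g 0, ?_⟩
        have := nwalk_of_finwalk hw
        rwa [← hcl] at this
      have hcn : c ≤ m + 2 := by simpa using Fintype.card_le_of_injective _ hginj
      have : c = m + 2 := by omega
      rw [this]
    have := hprim (m + 2) hall
    omega
  -- the vertex set of the short cycle
  set inW : Fin (m + 2) → Prop := fun w => ∃ a, a < s ∧ f a = w with hinWdef
  -- loops in the s-step graph at cycle vertices
  have hloop : ∀ w, inW w → NWalk E s w w := by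
    rintro w ⟨a, has, rfl⟩
    have := nwalk_cyc hs0 hf hfsf0 a s
    rwa [Nat.add_mod_right, Nat.mod_eq_of_lt has] at this
  -- reaching the cycle from i
  have hexd : ∃ d, ∃ w, inW w ∧ NWalk E d i w := by
    obtain ⟨p, hp⟩ := hsc' i (f 0)
    exact ⟨p, f 0, ⟨0, hs0, rfl⟩, hp⟩
  set d := Nat.find hexd with hddef
  have hd_min : ∀ c, (∃ w, inW w ∧ NWalk E c i w) → d ≤ c := fun c h => Nat.find_min' hexd h
  obtain ⟨w₀, hw₀, hw₀w⟩ := Nat.find_spec hexd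
  obtain ⟨g, hg0, hgd, hg⟩ := hw₀w
  have hgnotW : ∀ t, t < d → ¬ inW (g t) := by
    intro t ht hW
    have := hd_min t ⟨g t, hW, ⟨g, hg0, rfl, fun r hr => hg r (by omega)⟩⟩
    omega
  have hginj : ∀ a b, a < b → b < d → g a ≠ g b := by
    intro a b hab hbd heq
    have hs' := nwalk_splice hg hab (by omega) heq
    rw [hg0, hgd] at hs'
    have := hd_min _ ⟨w₀, hw₀, hs'⟩
    omega
  have hds : d + s ≤ m + 2 := by
    have hinjsum : Function.Injective
        (Sum.elim (fun a : Fin d => g a.val) (fun b : Fin s => f b.val)) := by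
      rintro (a | a) (b | b) hab <;> simp only [Sum.elim_inl, Sum.elim_inr] at hab
      · congr 1
        by_contra hne
        have hne' : a.val ≠ b.val := fun hc => hne (Fin.ext hc)
        rcases Nat.lt_or_ge a.val b.val with h | h
        · exact hginj a.val b.val h b.isLt hab
        · exact hginj b.val a.val (by omega) a.isLt hab.symm
      · exact absurd (⟨b.val, b.isLt, hab.symm⟩ : inW (g a.val)) (hgnotW a.val a.isLt)
      · exact absurd (⟨a.val, a.isLt, hab⟩ : inW (g b.val)) (hgnotW b.val b.isLt)
      · congr 1
        by_contra hne
        have hne' : a.val ≠ b.val := fun hc => hne (Fin.ext hc)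
        rcases Nat.lt_or_ge a.val b.val with h | h
        · exact hinj a.val b.val h b.isLt hab
        · exact hinj b.val a.val (by omega) a.isLt hab.symm
    have := Fintype.card_le_of_injective _ hinjsum
    simpa using this
  -- from any cycle vertex, walks of length exactly s*(m+1) to anywhere
  have hkey : ∀ w, inW w → ∀ v, NWalk E (s * (m + 1)) w v := by
    intro w hw v
    obtain ⟨d₀, hd₀⟩ := hsc' w v
    obtain ⟨x, hxw, hxd⟩ := residue hsc' hprim hs0 v d₀
    obtain ⟨m₀, hm₀⟩ := hxd
    have hwv : NWalk E (s * m₀) w v := by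
      have := nwalk_append hd₀ hxw
      rwa [hm₀] at this
    obtain ⟨m₁, hm₁k, hm₁n, hm₁w⟩ := nwalk_shorten hn0 (nwalk_chunk_from hwv)
    have hloopw : NWalk (fun a b => NWalk E s a b) (m + 1 - m₁) w w :=
      nwalk_loop (hloop w hw) _
    have := nwalk_append hloopw hm₁w
    rw [show m + 1 - m₁ + m₁ = m + 1 by omega] at this
    exact nwalk_chunk_to this
  -- arithmetic
  obtain ⟨A, hA⟩ : ∃ A, s * m = A := ⟨_, rfl⟩
  obtain ⟨B, hB⟩ : ∃ B, (m + 1) * m = B := ⟨_, rfl⟩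
  have hAB : A ≤ B := by rw [← hA, ← hB]; exact Nat.mul_le_mul_right m hsm1
  have hkk : B + (m + 1) + 1 ≤ k := by
    have e : B + (m + 1) = (m + 1) ^ 2 := by rw [← hB]; ring
    have hk' : (m + 1) ^ 2 + 1 ≤ k := by
      have e2 : m + 2 - 1 = m + 1 := by omega
      rwa [e2] at hk
    omega
  have hlen : s * (m + 1) = A + s := by rw [← hA]; ring
  set t := k - (A + s) with htdef
  have h_t : t + (A + s) = k := by omega
  have h_dt : d ≤ t := by omega
  -- walk of length t from i ending at a cycle vertex
  have hcycwin := nwalk_cyc hs0 hf hfsf0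
  obtain ⟨a₀, ha₀s, ha₀⟩ := hw₀
  have step1 : NWalk E t i (f ((a₀ + (t - d)) % s)) := by
    have hwin := hcycwin a₀ (t - d)
    rw [Nat.mod_eq_of_lt ha₀s, ha₀] at hwin
    have := nwalk_append (⟨g, hg0, hgd, hg⟩ : NWalk E d i w₀) hwin
    rwa [show d + (t - d) = t by omega] at this
  have step2 : NWalk E (A + s) (f ((a₀ + (t - d)) % s)) j := by
    have hwmem : inW (f ((a₀ + (t - d)) % s)) := ⟨_, Nat.mod_lt _ hs0, rfl⟩
    have := hkey _ hwmem j
    rwa [hlen] at this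
  have final : NWalk E k i j := by
    have := nwalk_append step1 step2
    rwa [h_t] at this
  exact finwalk_of_nwalk final
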